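/- arXiv:1010.3182 — 4 statements merged into one kernel-verified Lean document; each statement's English description precedes it below -/
import Mathlib

section
/- Let g be a finite-dimensional Lie algebra over an algebraically closed field of characteristic 0 and let (e, h, f) be an sl2-triple in g (i.e. [h,e] = 2e, [h,f] = -2f, [e,f] = h). Then g decomposes as a direct sum of vector spaces g = [e, g] ⊕ ker(ad f), i.e. the image of ad(e) and the kernel of ad(f) intersect trivially and span g. -/
open Module LinearMap

section Sl2Aux

variable {K : Type*} [Field K] [CharZero K]
variable {V : Type*} [AddCommGroup V] [Module K V]

/-- Pointwise commutator identity: `E ∘ F^(k+1)` in terms of `F^(k+1) ∘ E`, `F^k ∘ H`, `F^k`. -/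
lemma sl2_keyEF (E F H : Module.End K V)
    (hHF : ∀ x, H (F x) = F (H x) - (2:K) • F x)
    (hEF : ∀ x, E (F x) = F (E x) + H x) :
    ∀ (k : ℕ) (w : V), E ((F ^ (k+1)) w)
      = (F ^ (k+1)) (E w) + ((k:K)+1) • (F ^ k) (H w) - (((k:K)+1)*(k:K)) • (F ^ k) w := by
  intro k
  induction k with
  | zero =>
    intro w
    simp only [pow_one, pow_zero, Module.End.one_apply, Nat.cast_zero, zero_add, mul_zero,
      zero_smul, sub_zero, one_smul]
    exact hEF w
  | succ k ih =>
    intro w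
    have hp : ∀ y : V, (F ^ (k+1+1)) y = (F ^ (k+1)) (F y) := by
      intro y; rw [pow_succ, Module.End.mul_apply]
    have hp' : ∀ y : V, (F ^ (k+1)) y = (F ^ k) (F y) := by
      intro y; rw [pow_succ, Module.End.mul_apply]
    rw [hp w, ih (F w), hEF w, hHF w]
    rw [map_add, map_sub, map_smul, ← hp (E w), ← hp' (H w), ← hp' w]
    push_cast
    module

end Sl2Aux

section Sl2Nil

variable {K : Type*} [Field K] [CharZero K] [IsAlgClosed K]
variable {V : Type*} [AddCommGroup V] [Module K V] [FiniteDimensional K V]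

/-- If `[H, F] = -2 F` (pointwise), then `F` is nilpotent. -/
lemma sl2_nilpotent (F H : Module.End K V)
    (hHF : ∀ x, H (F x) = F (H x) - (2:K) • F x) :
    F ^ (finrank K V + 1) = 0 := by
  classical
  set d := finrank K V with hd
  have hpow : ∀ (μ : K) (k : ℕ) (y : V),
      ((H - (μ - 2) • 1) ^ k) (F y) = F (((H - μ • 1) ^ k) y) := by
    intro μ k
    induction k with
    | zero => intro y; simp
    | succ k ih =>
      intro y
      rw [pow_succ, Module.End.mul_apply, pow_succ, Module.End.mul_apply]
      have h1 : (H - (μ - 2) • 1) (F y) = F ((H - μ • 1) y) := by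
        simp only [LinearMap.sub_apply, LinearMap.smul_apply, Module.End.one_apply, map_sub,
          map_smul, hHF y]
        module
      rw [h1, ih ((H - μ • 1) y)]
  have hshift : ∀ (μ : K) (x : V), x ∈ H.maxGenEigenspace μ →
      F x ∈ H.maxGenEigenspace (μ - 2) := by
    intro μ x hx
    rw [Module.End.mem_maxGenEigenspace] at hx ⊢
    obtain ⟨k, hk⟩ := hx
    exact ⟨k, by rw [hpow μ k x, hk, map_zero]⟩
  have hchain : ∀ (μ : K) (x : V), x ∈ H.maxGenEigenspace μ → ∀ j : ℕ,
      (F ^ j) x ∈ H.maxGenEigenspace (μ - 2 * j) := by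
    intro μ x hx j
    induction j with
    | zero => simpa using hx
    | succ j ih =>
      have h2 : (F ^ (j+1)) x = F ((F ^ j) x) := by rw [pow_succ', Module.End.mul_apply]
      rw [h2]
      have h3 := hshift _ _ ih
      convert h3 using 2
      push_cast; ring
  have hkill : ∀ (μ : K) (x : V), x ∈ H.maxGenEigenspace μ → (F ^ (d+1)) x = 0 := by
    intro μ x hx
    by_contra hne
    have hne' : ∀ j : ℕ, j ≤ d → (F ^ j) x ≠ 0 := by
      intro j hj h0
      apply hne
      have h4 : F ^ (d+1) = F ^ (d+1-j) * F ^ j := by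
        rw [← pow_add]; congr 1; omega
      rw [h4, Module.End.mul_apply, h0, map_zero]
    have hinj : Function.Injective (fun j : Fin (d+1) => μ - 2 * ((j : ℕ) : K)) := by
      intro i j hij
      simp only [sub_right_inj] at hij
      have h2 : ((i : ℕ) : K) = ((j : ℕ) : K) :=
        mul_left_cancel₀ (by norm_num : (2:K) ≠ 0) hij
      exact Fin.ext (Nat.cast_injective h2)
    have hind : iSupIndep (fun j : Fin (d+1) => H.maxGenEigenspace (μ - 2 * ((j : ℕ) : K))) :=
      (H.independent_maxGenEigenspace).comp hinj
    have hli : LinearIndependent K (fun j : Fin (d+1) => (F ^ (j : ℕ)) x) :=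
      hind.linearIndependent _ (fun j => hchain μ x hx (j : ℕ))
        (fun j => hne' (j : ℕ) (by omega))
    have h5 := hli.fintype_card_le_finrank
    simp only [Fintype.card_fin, ← hd] at h5
    omega
  ext x
  have hx : x ∈ (⊤ : Submodule K V) := Submodule.mem_top
  rw [← Module.End.iSup_maxGenEigenspace_eq_top H] at hx
  simp only [LinearMap.zero_apply]
  refine Submodule.iSup_induction _ (motive := fun y => (F ^ (d+1)) y = 0) hx ?_ ?_ ?_
  · intro μ y hy; exact hkill μ y hy
  · exact map_zero _
  · intro y z hy hz; rw [map_add, hy, hz, add_zero]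

/-- Disjointness of `range E` and `ker F` for an sl2 triple of endomorphisms. -/
lemma sl2_disjoint (E F H : Module.End K V)
    (hHE : ∀ x, H (E x) = E (H x) + (2:K) • E x)
    (hHF : ∀ x, H (F x) = F (H x) - (2:K) • F x)
    (hEF : ∀ x, E (F x) = F (E x) + H x) :
    Disjoint (LinearMap.range E) (LinearMap.ker F) := by
  classical
  rw [disjoint_iff]
  by_contra hbot
  set N := LinearMap.range E ⊓ LinearMap.ker F with hN
  have hNH : ∀ x ∈ N, H x ∈ N := by
    intro x hx
    rw [hN, Submodule.mem_inf] at hx ⊢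
    obtain ⟨hr, hk⟩ := hx
    obtain ⟨w, rfl⟩ := hr
    have hFEw : F (E w) = 0 := hk
    constructor
    · exact ⟨H w + (2:K) • w, by rw [map_add, map_smul]; exact (hHE w).symm⟩
    · have h6 := hHF (E w)
      rw [hFEw, map_zero] at h6
      show F (H (E w)) = 0
      have h7 : (0:V) = F (H (E w)) - (2:K) • 0 := h6
      rw [smul_zero, sub_zero] at h7
      exact h7.symm
  haveI : Nontrivial N := Submodule.nontrivial_iff_ne_bot.mpr hbot
  obtain ⟨μ, hμ⟩ := Module.End.exists_eigenvalue (H.restrict hNH)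
  obtain ⟨v0, hv0⟩ := hμ.exists_hasEigenvector
  set v : V := (v0 : V) with hv
  have hvne : v ≠ 0 := fun h => hv0.right (Subtype.ext h)
  have hHv : H v = μ • v := by
    have h7 := congrArg (Subtype.val) hv0.apply_eq_smul
    simpa [LinearMap.restrict_coe_apply] using h7
  have hvN : v ∈ N := v0.2
  rw [hN, Submodule.mem_inf] at hvN
  obtain ⟨hvR, hvK⟩ := hvN
  obtain ⟨w₀, hw₀⟩ := hvR
  have hFv : F v = 0 := hvK
  -- E is nilpotent
  have hHE' : ∀ x, (-H) (E x) = E ((-H) x) - (2:K) • E x := by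
    intro x
    simp only [LinearMap.neg_apply, map_neg, hHE x]
    module
  have hEF' : ∀ x, F (E x) = E (F x) + (-H) x := by
    intro x
    simp only [LinearMap.neg_apply]
    rw [hEF x]
    abel
  have hnilE : E ^ (finrank K V + 1) = 0 := sl2_nilpotent E (-H) hHE'
  -- minimal k with E^k v = 0
  have hP : ∃ k, (E ^ k) v = 0 := ⟨finrank K V + 1, by rw [hnilE]; rfl⟩
  have hk0 : (E ^ Nat.find hP) v = 0 := Nat.find_spec hP
  have hkpos : Nat.find hP ≠ 0 := by
    intro h
    rw [h, pow_zero] at hk0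
    exact hvne hk0
  obtain ⟨n, hn⟩ : ∃ n, Nat.find hP = n + 1 := ⟨Nat.find hP - 1, by omega⟩
  have hkn : (E ^ n) v ≠ 0 := Nat.find_min hP (by omega)
  rw [hn] at hk0
  -- the eigenvalue is a nonpositive integer
  have key2 := sl2_keyEF F E (-H) hHE' hEF' n v
  have t1 : F ((E ^ (n+1)) v) = 0 := by rw [hk0, map_zero]
  have t2 : (E ^ (n+1)) (F v) = 0 := by rw [hFv, map_zero]
  have t3 : (E ^ n) ((-H) v) = -(μ • (E ^ n) v) := by
    rw [LinearMap.neg_apply, hHv, map_neg, map_smul]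
  rw [t1, t2, t3, zero_add] at key2
  -- key2 : 0 = (n+1) • -(μ • X) - ((n+1)*n) • X
  have h8 : (((n:K)+1) * (μ + (n:K))) • (E ^ n) v
      = -(((n:K)+1) • -(μ • (E ^ n) v) - (((n:K)+1)*(n:K)) • (E ^ n) v) := by
    module
  rw [← key2, neg_zero] at h8
  have hμn : μ = -(n : K) := by
    rcases smul_eq_zero.mp h8 with h9 | h9
    · rcases mul_eq_zero.mp h9 with h10 | h10
      · exact absurd h10 (Nat.cast_add_one_ne_zero n)
      · exact eq_neg_of_add_eq_zero_left h10
    · exact absurd h9 hkn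
  -- main induction: no preimage of v can be killed by a power of F unless v = 0
  have main : ∀ m, ∀ w : V, (F ^ m) w = 0 → E w = v → v = 0 := by
    intro m
    induction m with
    | zero =>
      intro w hw hEw
      rw [pow_zero, Module.End.one_apply] at hw
      rw [← hEw, hw, map_zero]
    | succ m ih =>
      intro w hw hEw
      have h1 : E ((F ^ (m+1)) w) = 0 := by rw [hw, map_zero]
      have h2 : (F ^ (m+1)) (E w) = 0 := by
        rw [hEw, pow_succ, Module.End.mul_apply, hFv, map_zero]
      have h3 := sl2_keyEF E F H hHF hEF m w
      rw [h1, h2, zero_add] at h3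
      have h5 : ((m:K)+1) • (F ^ m) (H w) = (((m:K)+1) * (m:K)) • (F ^ m) w :=
        sub_eq_zero.mp h3.symm
      have h4 : (F ^ m) (H w) = (m : K) • (F ^ m) w := by
        have h5' : ((m:K)+1) • (F ^ m) (H w) = ((m:K)+1) • ((m:K) • (F ^ m) w) := by
          rw [h5, smul_smul]
        exact smul_right_injective V (Nat.cast_add_one_ne_zero m : ((m:K)+1) ≠ 0) h5'
      have hc : (m:K) - μ + 2 ≠ 0 := by
        rw [hμn]
        have he : (m:K) - -(n:K) + 2 = ((m + n + 2 : ℕ) : K) := by push_cast; ring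
        rw [he]
        exact Nat.cast_ne_zero.mpr (by omega)
      set c : K := ((m:K) - μ + 2)⁻¹ with hcdef
      set u : V := w - c • (H w - (μ - 2) • w) with hu
      have hEHw : E (H w) = μ • v - (2:K) • v := by
        have h6 := hHE w
        rw [hEw, hHv] at h6
        rw [eq_sub_iff_add_eq]
        exact h6.symm
      have hEu : E u = v := by
        rw [hu, map_sub, map_smul, map_sub, map_smul, hEw, hEHw]
        have h7 : μ • v - (2:K) • v - (μ - 2) • v = 0 := by module
        rw [h7, smul_zero, sub_zero]
      have hFu : (F ^ m) u = 0 := by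
        rw [hu, map_sub, map_smul, map_sub, map_smul, h4]
        have h7 : (m:K) • (F ^ m) w - (μ - 2) • (F ^ m) w = ((m:K) - μ + 2) • (F ^ m) w := by
          module
        rw [h7, smul_smul, hcdef, inv_mul_cancel₀ hc, one_smul, sub_self]
      exact ih u hFu hEu
  have hnilF : F ^ (finrank K V + 1) = 0 := sl2_nilpotent F H hHF
  exact hvne (main _ w₀ (by rw [hnilF]; rfl) hw₀)

/-- Full decomposition for an sl2 triple of endomorphisms. -/
lemma sl2_isCompl (E F H : Module.End K V)
    (hHE : ∀ x, H (E x) = E (H x) + (2:K) • E x)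
    (hHF : ∀ x, H (F x) = F (H x) - (2:K) • F x)
    (hEF : ∀ x, E (F x) = F (E x) + H x) :
    IsCompl (LinearMap.range E) (LinearMap.ker F) := by
  have d1 := sl2_disjoint E F H hHE hHF hEF
  have hHF2 : ∀ x, (-H) (F x) = F ((-H) x) + (2:K) • F x := by
    intro x; simp only [LinearMap.neg_apply, map_neg, hHF x]; module
  have hHE2 : ∀ x, (-H) (E x) = E ((-H) x) - (2:K) • E x := by
    intro x; simp only [LinearMap.neg_apply, map_neg, hHE x]; module
  have hFE2 : ∀ x, F (E x) = E (F x) + (-H) x := by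
    intro x; simp only [LinearMap.neg_apply]; rw [hEF x]; abel
  have d2 := sl2_disjoint F E (-H) hHF2 hHE2 hFE2
  have r1 := LinearMap.finrank_range_add_finrank_ker E
  have r2 := LinearMap.finrank_range_add_finrank_ker F
  have i1 := Submodule.finrank_add_finrank_le_of_disjoint d1
  have i2 := Submodule.finrank_add_finrank_le_of_disjoint d2
  refine ⟨d1, codisjoint_iff.mpr ?_⟩
  exact Submodule.eq_top_of_disjoint _ _ (by omega) d1

end Sl2Nil

/-- For an sl2-triple (e,h,f) in a finite-dimensional Lie algebra over an algebraically
closed field of characteristic 0, the Lie algebra decomposes as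
g = [e, g] ⊕ ker(ad f). -/
theorem stmt_0 {K : Type*} [Field K] [IsAlgClosed K] [CharZero K]
    {L : Type*} [LieRing L] [LieAlgebra K L] [Module.Finite K L]
    (e h f : L)
    (hhe : ⁅h, e⁆ = (2 : K) • e) (hhf : ⁅h, f⁆ = (-2 : K) • f) (hef : ⁅e, f⁆ = h) :
    IsCompl (LinearMap.range (LieAlgebra.ad K L e)) (LinearMap.ker (LieAlgebra.ad K L f)) := by
  apply sl2_isCompl (LieAlgebra.ad K L e) (LieAlgebra.ad K L f) (LieAlgebra.ad K L h)
  · intro x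
    simp only [LieAlgebra.ad_apply]
    rw [leibniz_lie h e x, hhe, smul_lie]
    module
  · intro x
    simp only [LieAlgebra.ad_apply]
    rw [leibniz_lie h f x, hhf, smul_lie]
    module
  · intro x
    simp only [LieAlgebra.ad_apply]
    rw [leibniz_lie e f x, hef]
    abel
end

section
/- Let (·,·) be the Cartan pairing of type A_{n-1}: (x,y) = Σ_{i=1}^{n-1} x_i(2y_i − y_{i-1} − y_{i+1}) with y_0 = y_n = 0. Suppose d, v ∈ Z_{≥0}^{n-1} are such that d − v is dominant, i.e. (ε_i, d − v) ≥ 0 for all standard basis vectors ε_i (equivalently 2(d_i−v_i) − (d_{i-1}−v_{i-1}) − (d_{i+1}−v_{i+1}) ≥ 0 for all i). Define p(w) := (d, w) − (1/2)(w, w). Then for every v' ∈ Z_{≥0}^{n-1} with v' ≤ v componentwise and v' ≠ v, one has p(v) − p(v') ≥ (1/2)(u, u) > 0, where u := v − v'. -/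
/-- The Cartan pairing of type A_{n-1}:
`(a,b) = Σ_{i=1}^{n-1} a_i (2 b_i − b_{i-1} − b_{i+1})` (with boundary values 0). -/
noncomputable def cartanPairingA (n : ℕ) (a b : ℤ → ℤ) : ℤ :=
  ∑ i ∈ Finset.Icc (1 : ℤ) ((n : ℤ) - 1), a i * (2 * b i - b (i - 1) - b (i + 1))

namespace Stmt8Aux

lemma sum_Icc_shift (f : ℤ → ℤ) (lo hi : ℤ) :
    ∑ i ∈ Finset.Icc (lo + 1) (hi + 1), f i = ∑ i ∈ Finset.Icc lo hi, f (i + 1) := by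
  rw [← Finset.map_add_right_Icc, Finset.sum_map]
  rfl

lemma shift_eq (n : ℕ) (a b : ℤ → ℤ)
    (ha : ∀ k : ℤ, k ∉ Finset.Icc (1 : ℤ) ((n : ℤ) - 1) → a k = 0)
    (hb : ∀ k : ℤ, k ∉ Finset.Icc (1 : ℤ) ((n : ℤ) - 1) → b k = 0) :
    ∑ i ∈ Finset.Icc (1 : ℤ) ((n : ℤ) - 1), a i * b (i + 1)
      = ∑ i ∈ Finset.Icc (1 : ℤ) ((n : ℤ) - 1), a (i - 1) * b i := by
  have h1 : ∑ i ∈ Finset.Icc (2 : ℤ) (n : ℤ), a (i - 1) * b i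
      = ∑ i ∈ Finset.Icc (1 : ℤ) ((n : ℤ) - 1), a (i + 1 - 1) * b (i + 1) := by
    have := sum_Icc_shift (fun j => a (j - 1) * b j) 1 ((n : ℤ) - 1)
    simpa using this
  have h2 : ∑ i ∈ Finset.Icc (2 : ℤ) (n : ℤ), a (i - 1) * b i
      = ∑ i ∈ Finset.Icc (1 : ℤ) (n : ℤ), a (i - 1) * b i := by
    apply Finset.sum_subset (Finset.Icc_subset_Icc_left (by norm_num))
    intro x hx hx'
    simp only [Finset.mem_Icc] at hx hx'
    have hx1 : x = 1 := by omega
    have : a (x - 1) = 0 := by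
      apply ha; simp only [Finset.mem_Icc]; omega
    simp [this]
  have h3 : ∑ i ∈ Finset.Icc (1 : ℤ) ((n : ℤ) - 1), a (i - 1) * b i
      = ∑ i ∈ Finset.Icc (1 : ℤ) (n : ℤ), a (i - 1) * b i := by
    apply Finset.sum_subset (Finset.Icc_subset_Icc_right (by norm_num))
    intro x hx hx'
    simp only [Finset.mem_Icc] at hx hx'
    have : b x = 0 := by
      apply hb; simp only [Finset.mem_Icc]; omega
    simp [this]
  calc ∑ i ∈ Finset.Icc (1 : ℤ) ((n : ℤ) - 1), a i * b (i + 1)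
      = ∑ i ∈ Finset.Icc (1 : ℤ) ((n : ℤ) - 1), a (i + 1 - 1) * b (i + 1) := by
        apply Finset.sum_congr rfl; intro i _; norm_num
    _ = ∑ i ∈ Finset.Icc (2 : ℤ) (n : ℤ), a (i - 1) * b i := h1.symm
    _ = ∑ i ∈ Finset.Icc (1 : ℤ) (n : ℤ), a (i - 1) * b i := h2
    _ = ∑ i ∈ Finset.Icc (1 : ℤ) ((n : ℤ) - 1), a (i - 1) * b i := h3.symm

lemma cartan_expand (n : ℕ) (a b : ℤ → ℤ) :
    cartanPairingA n a b
      = 2 * (∑ i ∈ Finset.Icc (1 : ℤ) ((n : ℤ) - 1), a i * b i)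
        - (∑ i ∈ Finset.Icc (1 : ℤ) ((n : ℤ) - 1), a i * b (i - 1))
        - (∑ i ∈ Finset.Icc (1 : ℤ) ((n : ℤ) - 1), a i * b (i + 1)) := by
  unfold cartanPairingA
  rw [Finset.mul_sum, ← Finset.sum_sub_distrib, ← Finset.sum_sub_distrib]
  apply Finset.sum_congr rfl
  intro i _; ring

lemma cartan_symm (n : ℕ) (a b : ℤ → ℤ)
    (ha : ∀ k : ℤ, k ∉ Finset.Icc (1 : ℤ) ((n : ℤ) - 1) → a k = 0)
    (hb : ∀ k : ℤ, k ∉ Finset.Icc (1 : ℤ) ((n : ℤ) - 1) → b k = 0) :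
    cartanPairingA n a b = cartanPairingA n b a := by
  rw [cartan_expand, cartan_expand]
  have h1 := shift_eq n a b ha hb
  have h2 := shift_eq n b a hb ha
  have e1 : ∑ i ∈ Finset.Icc (1 : ℤ) ((n : ℤ) - 1), b i * a i
      = ∑ i ∈ Finset.Icc (1 : ℤ) ((n : ℤ) - 1), a i * b i := by
    apply Finset.sum_congr rfl; intro i _; ring
  have e2 : ∑ i ∈ Finset.Icc (1 : ℤ) ((n : ℤ) - 1), b i * a (i - 1)
      = ∑ i ∈ Finset.Icc (1 : ℤ) ((n : ℤ) - 1), a (i - 1) * b i := by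
    apply Finset.sum_congr rfl; intro i _; ring
  have e3 : ∑ i ∈ Finset.Icc (1 : ℤ) ((n : ℤ) - 1), b (i - 1) * a i
      = ∑ i ∈ Finset.Icc (1 : ℤ) ((n : ℤ) - 1), a i * b (i - 1) := by
    apply Finset.sum_congr rfl; intro i _; ring
  rw [e1, e2, ← h1]
  rw [e3] at h2
  rw [h2]
  ring

lemma cartan_sub_right (n : ℕ) (a b c : ℤ → ℤ) :
    cartanPairingA n a (fun k => b k - c k)
      = cartanPairingA n a b - cartanPairingA n a c := by
  unfold cartanPairingA
  rw [← Finset.sum_sub_distrib]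
  apply Finset.sum_congr rfl
  intro i _; ring

lemma cartan_sub_left (n : ℕ) (a b c : ℤ → ℤ) :
    cartanPairingA n (fun k => a k - b k) c
      = cartanPairingA n a c - cartanPairingA n b c := by
  unfold cartanPairingA
  rw [← Finset.sum_sub_distrib]
  apply Finset.sum_congr rfl
  intro i _; ring

lemma cartan_self_squares (n : ℕ) (u : ℤ → ℤ)
    (hu : ∀ k : ℤ, k ∉ Finset.Icc (1 : ℤ) ((n : ℤ) - 1) → u k = 0) :
    cartanPairingA n u u
      = ∑ i ∈ Finset.Icc (0 : ℤ) ((n : ℤ) - 1), (u (i + 1) - u i) ^ 2 := by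
  have hA : ∑ i ∈ Finset.Icc (0 : ℤ) ((n : ℤ) - 1), u (i + 1) ^ 2
      = ∑ i ∈ Finset.Icc (1 : ℤ) ((n : ℤ) - 1), u i ^ 2 := by
    rw [← sum_Icc_shift (fun j => u j ^ 2) 0 ((n : ℤ) - 1)]
    norm_num
    symm
    apply Finset.sum_subset (Finset.Icc_subset_Icc_right (by norm_num))
    intro x hx hx'
    rw [hu x hx']
    ring
  have hB : ∑ i ∈ Finset.Icc (0 : ℤ) ((n : ℤ) - 1), u i ^ 2
      = ∑ i ∈ Finset.Icc (1 : ℤ) ((n : ℤ) - 1), u i ^ 2 := by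
    symm
    apply Finset.sum_subset (Finset.Icc_subset_Icc_left (by norm_num))
    intro x _ hx'
    rw [hu x hx']
    ring
  have hD : ∑ i ∈ Finset.Icc (0 : ℤ) ((n : ℤ) - 1), u i * u (i + 1)
      = ∑ i ∈ Finset.Icc (1 : ℤ) ((n : ℤ) - 1), u i * u (i + 1) := by
    symm
    apply Finset.sum_subset (Finset.Icc_subset_Icc_left (by norm_num))
    intro x _ hx'
    rw [hu x hx']
    ring
  have hE : ∑ i ∈ Finset.Icc (1 : ℤ) ((n : ℤ) - 1), u i * u (i - 1)
      = ∑ i ∈ Finset.Icc (1 : ℤ) ((n : ℤ) - 1), u i * u (i + 1) := by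
    have h1 := shift_eq n u u hu hu
    rw [h1]
    apply Finset.sum_congr rfl; intro i _; ring
  have hexp := cartan_expand n u u
  have hsq : ∑ i ∈ Finset.Icc (0 : ℤ) ((n : ℤ) - 1), (u (i + 1) - u i) ^ 2
      = ∑ i ∈ Finset.Icc (0 : ℤ) ((n : ℤ) - 1), u (i + 1) ^ 2
        + ∑ i ∈ Finset.Icc (0 : ℤ) ((n : ℤ) - 1), u i ^ 2
        - 2 * ∑ i ∈ Finset.Icc (0 : ℤ) ((n : ℤ) - 1), u i * u (i + 1) := by
    rw [Finset.mul_sum, ← Finset.sum_add_distrib, ← Finset.sum_sub_distrib]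
    apply Finset.sum_congr rfl; intro i _; ring
  have hsq2 : ∑ i ∈ Finset.Icc (1 : ℤ) ((n : ℤ) - 1), u i * u i
      = ∑ i ∈ Finset.Icc (1 : ℤ) ((n : ℤ) - 1), u i ^ 2 := by
    apply Finset.sum_congr rfl; intro i _; ring
  rw [hexp, hsq, hA, hB, hD, hE, hsq2]
  ring

end Stmt8Aux

open Stmt8Aux in
/-- With `p(w) = (d,w) − (1/2)(w,w)` for the type A Cartan pairing, if `d − v` is
dominant then for every `0 ≤ v' ≤ v` with `v' ≠ v` one has
`p(v) − p(v') ≥ (1/2)(u,u) > 0` where `u = v − v'`. -/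
theorem stmt_8 (n : ℕ) (d v v' : ℤ → ℤ)
    (hd_supp : ∀ k : ℤ, k ∉ Finset.Icc (1 : ℤ) ((n : ℤ) - 1) → d k = 0)
    (hv_supp : ∀ k : ℤ, k ∉ Finset.Icc (1 : ℤ) ((n : ℤ) - 1) → v k = 0)
    (hv'_supp : ∀ k : ℤ, k ∉ Finset.Icc (1 : ℤ) ((n : ℤ) - 1) → v' k = 0)
    (hd_pos : ∀ k, 0 ≤ d k) (hv_pos : ∀ k, 0 ≤ v k) (hv'_pos : ∀ k, 0 ≤ v' k)
    (hdom : ∀ k ∈ Finset.Icc (1 : ℤ) ((n : ℤ) - 1),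
      0 ≤ 2 * (d k - v k) - (d (k - 1) - v (k - 1)) - (d (k + 1) - v (k + 1)))
    (hle : ∀ k, v' k ≤ v k) (hne : v' ≠ v) :
    (0 : ℚ) < (1 / 2 : ℚ) * (cartanPairingA n (fun k => v k - v' k) (fun k => v k - v' k) : ℚ)
    ∧ (1 / 2 : ℚ) * (cartanPairingA n (fun k => v k - v' k) (fun k => v k - v' k) : ℚ)
        ≤ ((cartanPairingA n d v : ℚ) - (1 / 2 : ℚ) * (cartanPairingA n v v : ℚ))
          - ((cartanPairingA n d v' : ℚ) - (1 / 2 : ℚ) * (cartanPairingA n v' v' : ℚ)) := by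
  set u : ℤ → ℤ := fun k => v k - v' k with hu_def
  have hu_supp : ∀ k : ℤ, k ∉ Finset.Icc (1 : ℤ) ((n : ℤ) - 1) → u k = 0 := by
    intro k hk
    simp [hu_def, hv_supp k hk, hv'_supp k hk]
  have hu_nonneg : ∀ k, 0 ≤ u k := fun k => by simp [hu_def]; exact hle k
  -- positivity of (u,u)
  have hCuu_pos : 0 < cartanPairingA n u u := by
    rw [cartan_self_squares n u hu_supp]
    rcases Function.ne_iff.mp hne with ⟨k0, hk0⟩
    have huk0 : u k0 ≠ 0 := by
      have : u k0 = v k0 - v' k0 := rfl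
      omega
    by_contra hcon
    push_neg at hcon
    have hnn : ∀ i ∈ Finset.Icc (0 : ℤ) ((n : ℤ) - 1), (0:ℤ) ≤ (u (i + 1) - u i) ^ 2 :=
      fun i _ => sq_nonneg _
    have hz : ∑ i ∈ Finset.Icc (0 : ℤ) ((n : ℤ) - 1), (u (i + 1) - u i) ^ 2 = 0 :=
      le_antisymm hcon (Finset.sum_nonneg hnn)
    have hall := (Finset.sum_eq_zero_iff_of_nonneg hnn).mp hz
    have hstep : ∀ i ∈ Finset.Icc (0 : ℤ) ((n : ℤ) - 1), u (i + 1) = u i := by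
      intro i hi
      have := hall i hi
      have : u (i + 1) - u i = 0 := by
        have := pow_eq_zero_iff (n := 2) (by norm_num) |>.mp this
        exact this
      omega
    have hzero : ∀ k : ℤ, 0 ≤ k → k ≤ (n : ℤ) - 1 → u k = 0 := by
      intro k hk
      refine Int.le_induction (motive := fun k _ => k ≤ (n : ℤ) - 1 → u k = 0) ?_ ?_ k hk
      · intro _
        exact hu_supp 0 (by simp only [Finset.mem_Icc]; omega)
      · intro m hm ih hle'
        have hmem : m ∈ Finset.Icc (0 : ℤ) ((n : ℤ) - 1) := by
          simp only [Finset.mem_Icc]; omega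
        rw [hstep m hmem, ih (by omega)]
    have : u k0 = 0 := by
      by_cases hk0mem : k0 ∈ Finset.Icc (1 : ℤ) ((n : ℤ) - 1)
      · simp only [Finset.mem_Icc] at hk0mem
        exact hzero k0 (by omega) (by omega)
      · exact hu_supp k0 hk0mem
    exact huk0 this
  -- the key identity / inequality in ℤ
  have hsub : cartanPairingA n u (fun k => d k - v k) =
      ∑ i ∈ Finset.Icc (1 : ℤ) ((n : ℤ) - 1),
        u i * (2 * (d i - v i) - (d (i - 1) - v (i - 1)) - (d (i + 1) - v (i + 1))) := by
    unfold cartanPairingA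
    rfl
  have hCudv_nonneg : 0 ≤ cartanPairingA n u (fun k => d k - v k) := by
    rw [hsub]
    apply Finset.sum_nonneg
    intro i hi
    exact mul_nonneg (hu_nonneg i) (hdom i hi)
  have hv'_eq : v' = fun k => v k - u k := by
    funext k; simp [hu_def]
  have hdu_supp : ∀ k : ℤ, k ∉ Finset.Icc (1 : ℤ) ((n : ℤ) - 1) → d k - v k = 0 := by
    intro k hk; rw [hd_supp k hk, hv_supp k hk]; ring
  have hCdv' : cartanPairingA n d v' = cartanPairingA n d v - cartanPairingA n d u := by
    rw [hv'_eq]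
    exact cartan_sub_right n d v u
  have hCv'v' : cartanPairingA n v' v'
      = cartanPairingA n v v - 2 * cartanPairingA n u v + cartanPairingA n u u := by
    conv_lhs => rw [hv'_eq]
    rw [cartan_sub_right n _ v u, cartan_sub_left n v u v, cartan_sub_left n v u u]
    have hsymm : cartanPairingA n v u = cartanPairingA n u v :=
      cartan_symm n v u hv_supp hu_supp
    rw [hsymm]
    ring
  have hCdu : cartanPairingA n d u = cartanPairingA n u d :=
    cartan_symm n d u hd_supp hu_supp
  have hCud_split : cartanPairingA n u (fun k => d k - v k)
      = cartanPairingA n u d - cartanPairingA n u v :=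
    cartan_sub_right n u d v
  -- integer inequality
  have hkey : cartanPairingA n u u + 2 * cartanPairingA n u (fun k => d k - v k)
      = 2 * cartanPairingA n d v - cartanPairingA n v v
        - (2 * cartanPairingA n d v' - cartanPairingA n v' v') := by
    rw [hCdv', hCv'v', hCud_split, ← hCdu]
    ring
  have hint : cartanPairingA n u u
      ≤ 2 * cartanPairingA n d v - cartanPairingA n v v
        - (2 * cartanPairingA n d v' - cartanPairingA n v' v') := by
    rw [← hkey]
    linarith
  constructor
  · have : (0 : ℚ) < (cartanPairingA n u u : ℚ) := by exact_mod_cast hCuu_pos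
    linarith
  · have hq : (cartanPairingA n u u : ℚ)
        ≤ 2 * (cartanPairingA n d v : ℚ) - (cartanPairingA n v v : ℚ)
          - (2 * (cartanPairingA n d v' : ℚ) - (cartanPairingA n v' v' : ℚ)) := by
      exact_mod_cast hint
    linarith
end

section
/- Let D be an associative K[[h]]-algebra, flat and h-adically complete, with D/hD commutative, and let G be a group acting on D by K[[h]]-algebra automorphisms. Suppose Φ: g → D is a linear map from a Lie algebra g such that (1/h)[Φ(ξ), ·] equals the derivation ξ_D induced by the G-action for every ξ ∈ g, and suppose the center of D equals K[[h]]. If σ: D → D is a K[[h]]-semilinear anti-automorphism (with σ(h) = −h) commuting with the G-action in the sense that σ ∘ ξ_D = ξ_D ∘ σ, then for every ξ ∈ g the element σ(Φ(ξ)) − Φ(ξ) lies in the center K[[h]] of D. If moreover σ is the identity modulo h and Φ(ξ) is homogeneous of degree 2 for a grading with deg h = 2, then σ(Φ(ξ)) − Φ(ξ) ∈ K·h. -/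
lemma flat_smul_injective {R M : Type*} [CommRing R] [IsDomain R] [AddCommGroup M]
    [Module R M] (hflat : Module.Flat R M) {g : R} (hg : g ≠ 0) :
    Function.Injective (fun x : M => g • x) := by
  have : Module.Flat R M := hflat
  set f : R →ₗ[R] R := LinearMap.lsmul R R g with hf
  have hfinj : Function.Injective f := by
    intro a b hab
    simp only [hf, LinearMap.lsmul_apply, smul_eq_mul] at hab
    exact mul_left_cancel₀ hg hab
  have h2 : Function.Injective (f.rTensor M) :=
    Module.Flat.rTensor_preserves_injective_linearMap f hfinj
  have key : ∀ x : M, g • x = (TensorProduct.lid R M) (f.rTensor M ((TensorProduct.lid R M).symm x)) := by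
    intro x
    simp [hf]
  intro x y hxy
  simp only at hxy
  rw [key x, key y] at hxy
  have := h2 ((TensorProduct.lid R M).injective hxy)
  exact (TensorProduct.lid R M).symm.injective this



/-- Lemma on quantum comoment maps and parity anti-automorphisms: if `D` is a flat,
complete `K[[h]]`-quantization with commutative `D/hD` and center `K[[h]]`, `Φ` is a
quantum comoment map for a `G`-action (`[Φ(ξ), x] = h·ξ_D(x)`), and `σ` is a
`K[[h]]`-semilinear anti-automorphism with `σ(h) = −h` commuting with the action
derivations, then `σ(Φ ξ) − Φ ξ` is central, i.e. lies in `K[[h]]`; if moreover `σ` is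
the identity modulo `h` and `Φ ξ` is homogeneous of degree 2 for a grading with
`deg h = 2` (expressed by a `K^×`-action `θ`), then `σ(Φ ξ) − Φ ξ ∈ K·h`. -/
theorem stmt_17 {K : Type*} [Field K] [CharZero K]
    {D : Type*} [Ring D] [Algebra (PowerSeries K) D] [Algebra K D]
    [IsScalarTower K (PowerSeries K) D]
    {L : Type*} [LieRing L] [LieAlgebra K L]
    (hD : D) (hDdef : hD = algebraMap (PowerSeries K) D PowerSeries.X)
    (hflat : Module.Flat (PowerSeries K) D)
    (hcomm : ∀ x y : D, x * y - y * x ∈ Ideal.span {hD})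
    -- the G-action and its derivations ξ_D
    {G : Type*} [Group G] (action : G →* (D ≃ₐ[PowerSeries K] D))
    (xiD : L → D → D)
    -- the quantum comoment map Φ
    (Φ : L →ₗ[K] D)
    (hquant : ∀ (ξ : L) (x : D), Φ ξ * x - x * Φ ξ = hD * xiD ξ x)
    -- the center of D is K[[h]]
    (hcenter : ∀ z : D, (∀ x : D, z * x = x * z) →
      ∃ c : PowerSeries K, z = algebraMap (PowerSeries K) D c)
    -- the anti-automorphism σ
    (σ : D → D) (hσbij : Function.Bijective σ)
    (hσadd : ∀ x y : D, σ (x + y) = σ x + σ y)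
    (hσmul : ∀ x y : D, σ (x * y) = σ y * σ x)
    (hσh : σ hD = -hD)
    (hσK : ∀ c : K, σ (algebraMap K D c) = algebraMap K D c)
    (hσequiv : ∀ (ξ : L) (x : D), σ (xiD ξ x) = xiD ξ (σ x)) :
    (∀ ξ : L, ∃ c : PowerSeries K, σ (Φ ξ) - Φ ξ = algebraMap (PowerSeries K) D c)
    ∧ (∀ θ : Kˣ → (D ≃+* D),
        (∀ (t : Kˣ) (f : PowerSeries K),
          θ t (algebraMap (PowerSeries K) D f)
            = algebraMap (PowerSeries K) D (PowerSeries.rescale ((t : K) ^ 2) f)) →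
        (∀ (t : Kˣ) (ξ : L), θ t (Φ ξ) = ((t : K) ^ 2) • Φ ξ) →
        (∀ x : D, σ x - x ∈ Ideal.span {hD}) →
        (∀ (t : Kˣ) (x : D), θ t (σ x) = σ (θ t x)) →
        ∀ ξ : L, ∃ c : K, σ (Φ ξ) - Φ ξ = algebraMap K D c * hD) := by
  -- σ as an additive monoid hom
  set S : D →+ D := AddMonoidHom.mk' σ hσadd with hS
  have hSa : ∀ x : D, S x = σ x := fun _ => rfl
  have σsub : ∀ x y : D, σ (x - y) = σ x - σ y := fun x y => map_sub S x y
  -- hD is central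
  have hDcomm : ∀ x : D, hD * x = x * hD := by
    intro x; rw [hDdef]; exact Algebra.commutes _ _
  -- Part 1
  have part1 : ∀ ξ : L, ∃ c : PowerSeries K,
      σ (Φ ξ) - Φ ξ = algebraMap (PowerSeries K) D c := by
    intro ξ
    apply hcenter
    intro y
    obtain ⟨x, rfl⟩ := hσbij.2 y
    have h1 := congrArg σ (hquant ξ x)
    rw [σsub, hσmul, hσmul, hσmul, hσh, hσequiv] at h1
    -- h1 : σ x * σ (Φ ξ) - σ (Φ ξ) * σ x = xiD ξ (σ x) * -hD
    have h2 := hquant ξ (σ x)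
    -- h2 : Φ ξ * σ x - σ x * Φ ξ = hD * xiD ξ (σ x)
    have h3 : xiD ξ (σ x) * -hD = -(hD * xiD ξ (σ x)) := by
      rw [mul_neg, hDcomm]
    rw [h3, ← h2, neg_sub] at h1
    -- h1 : σ x * σ (Φ ξ) - σ (Φ ξ) * σ x = σ x * Φ ξ - Φ ξ * σ x
    have h4 : (σ (Φ ξ) - Φ ξ) * σ x - σ x * (σ (Φ ξ) - Φ ξ)
        = -((σ x * σ (Φ ξ) - σ (Φ ξ) * σ x) - (σ x * Φ ξ - Φ ξ * σ x)) := by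
      rw [sub_mul, mul_sub]; abel
    rw [h1, sub_self, neg_zero, sub_eq_zero] at h4
    exact h4
  refine ⟨part1, ?_⟩
  intro θ hθalg hθΦ hσid hθσ ξ
  rcases subsingleton_or_nontrivial D with hsub | hnt
  · exact ⟨0, Subsingleton.elim _ _⟩
  obtain ⟨f, hf⟩ := part1 ξ
  -- injectivity of the algebra map
  have hinj : Function.Injective (algebraMap (PowerSeries K) D) := by
    have h1 : (1 : D) ≠ 0 := one_ne_zero
    intro a b hab
    by_contra hne
    have hg : a - b ≠ 0 := sub_ne_zero.mpr hne
    have := flat_smul_injective hflat hg (M := D)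
    have h0 : (a - b) • (1 : D) = (a - b) • (0 : D) := by
      rw [smul_zero, sub_smul, Algebra.algebraMap_eq_smul_one, Algebra.algebraMap_eq_smul_one] at *
      rw [hab]; abel
    exact h1 (this h0)
  -- σ commutes with K-scalars
  have hσsmul : ∀ (c : K) (x : D), σ (c • x) = c • σ x := by
    intro c x
    rw [Algebra.smul_def, Algebra.smul_def, hσmul, hσK, Algebra.commutes]
  -- the algebra map is K-linear
  have halgsmul : ∀ (c : K) (g : PowerSeries K),
      algebraMap (PowerSeries K) D (c • g) = c • algebraMap (PowerSeries K) D g :=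
    fun c g => map_smul (IsScalarTower.toAlgHom K (PowerSeries K) D) c g
  -- the scaling equation
  have hres : ∀ t : Kˣ, PowerSeries.rescale ((t : K) ^ 2) f = ((t : K) ^ 2) • f := by
    intro t
    apply hinj
    rw [← hθalg t f, ← hf, map_sub, hθσ, hθΦ, hσsmul, halgsmul, ← smul_sub, hf]
  -- coefficients vanish away from degree 1
  have hcoeff : ∀ n : ℕ, n ≠ 1 → PowerSeries.coeff (R := K) n f = 0 := by
    intro n hn
    have t2 : (2 : K) ≠ 0 := two_ne_zero
    have := congrArg (PowerSeries.coeff (R := K) n) (hres (Units.mk0 (2 : K) t2))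
    rw [PowerSeries.coeff_rescale, PowerSeries.coeff_smul] at this
    simp only [Units.val_mk0, smul_eq_mul] at this
    by_contra hne
    have hpow : ((2 : K) ^ 2) ^ n = (2 : K) ^ 2 := by
      exact mul_right_cancel₀ hne this
    rw [← pow_mul] at hpow
    have h5 : (2 : ℕ) ^ (2 * n) = 2 ^ 2 := by exact_mod_cast hpow
    have := Nat.pow_right_injective (le_refl 2) h5
    omega
  -- f = C (coeff 1 f) * X
  have hfX : f = PowerSeries.C (R := K) (PowerSeries.coeff (R := K) 1 f) * PowerSeries.X := by
    ext n
    rw [PowerSeries.coeff_C_mul, PowerSeries.coeff_X]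
    by_cases hn : n = 1
    · subst hn; simp
    · rw [if_neg hn, mul_zero, hcoeff n hn]
  refine ⟨PowerSeries.coeff (R := K) 1 f, ?_⟩
  rw [hf, IsScalarTower.algebraMap_apply K (PowerSeries K) D, ← PowerSeries.C_eq_algebraMap,
    hDdef, ← map_mul]
  exact congrArg _ hfX
end

section
/- Let H be an associative algebra with an increasing exhaustive filtration, e ∈ H an idempotent of filtration degree 0, and m ⊂ H a two-sided ideal generated (as a left ideal) by central-like elements: specifically, suppose m is generated as a left H-ideal by a finite set {p_1,...,p_s} ∪ {x_1,...,x_m} where each p_j is central and each x_i satisfies [x_i, H] ⊆ (p_1,...,p_s)H and ex_i = x_ie. Then the two descending filtrations {e m^n e} and {(e m e)^n} on the algebra eHe are cofinal: (e m e)^n ⊆ e m^n e for all n, and for each n there exists N with e m^N e ⊆ (e m e)^n. -/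
/-- The submodule of elements `z` with `e * z = z` and `z * e = z`. -/
private def commSub {H : Type*} [Ring H] (e : H) : Submodule ℕ H where
  carrier := {z | e * z = z ∧ z * e = z}
  add_mem' := fun {a b} ha hb =>
    ⟨by rw [mul_add, ha.1, hb.1], by rw [add_mul, ha.2, hb.2]⟩
  zero_mem' := ⟨mul_zero e, zero_mul e⟩
  smul_mem' := fun n z hz =>
    ⟨by rw [mul_smul_comm, hz.1], by rw [smul_mul_assoc, hz.2]⟩

private lemma mem_commSub {H : Type*} [Ring H] {e z : H} :
    z ∈ commSub e ↔ e * z = z ∧ z * e = z := Iff.rfl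

/-- Cofinality of the filtrations `{e mⁿ e}` and `{(e m e)ⁿ}` on the spherical
subalgebra `eHe`: if `m` is a two-sided ideal of `H` generated as a left ideal by
central elements `p_j` together with elements `x_i` commuting with `e` and whose
commutators with `H` lie in `(p_1,…,p_s)H`, then `(e m e)ⁿ ⊆ e mⁿ e` and for every
`n` there is `N` with `e m^N e ⊆ (e m e)ⁿ`. -/
theorem stmt_18 {H : Type*} [Ring H]
    -- increasing exhaustive filtration on H, with e of degree 0
    (F : ℕ → Submodule ℕ H) (hFmono : Monotone F) (hFexh : (⨆ n, F n) = ⊤)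
    (e : H) (he : e * e = e) (heF : e ∈ F 0)
    (s m0 : ℕ) (p : Fin s → H) (x : Fin m0 → H)
    (hp_central : ∀ (j : Fin s) (y : H), p j * y = y * p j)
    (hx_comm : ∀ (i : Fin m0) (y : H),
      x i * y - y * x i ∈
        Submodule.span ℕ {z : H | ∃ (j : Fin s) (y' : H), z = p j * y'})
    (hxe : ∀ i : Fin m0, e * x i = x i * e)
    -- m : the left ideal generated by the p's and x's, assumed two-sided
    (M : Submodule ℕ H)
    (hMgen : M = Submodule.span ℕ
      {z : H | ∃ (y : H) (g : H),
        ((∃ j : Fin s, g = p j) ∨ (∃ i : Fin m0, g = x i)) ∧ z = y * g})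
    (hM_twosided : ∀ a ∈ M, ∀ y : H, a * y ∈ M) :
    (∀ n : ℕ, 0 < n →
      (Submodule.map ((LinearMap.mulLeft ℕ e) ∘ₗ (LinearMap.mulRight ℕ e)) M) ^ n
        ≤ Submodule.map ((LinearMap.mulLeft ℕ e) ∘ₗ (LinearMap.mulRight ℕ e)) (M ^ n))
    ∧ (∀ n : ℕ, 0 < n → ∃ N : ℕ,
      Submodule.map ((LinearMap.mulLeft ℕ e) ∘ₗ (LinearMap.mulRight ℕ e)) (M ^ N)
        ≤ (Submodule.map ((LinearMap.mulLeft ℕ e) ∘ₗ (LinearMap.mulRight ℕ e)) M) ^ n) := by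
  classical
  set f : H →ₗ[ℕ] H := (LinearMap.mulLeft ℕ e) ∘ₗ (LinearMap.mulRight ℕ e) with hf
  have hfz : ∀ z : H, f z = e * (z * e) := fun z => rfl
  set G : Set H := {g : H | (∃ j : Fin s, g = p j) ∨ ∃ i : Fin m0, g = x i} with hG
  set T : Submodule ℕ H := Submodule.span ℕ G with hT
  -- generators commute with e
  have hGe : ∀ g ∈ G, e * g = g * e := by
    rintro g (⟨j, rfl⟩ | ⟨i, rfl⟩)
    · exact (hp_central j e).symm
    · exact hxe i
  have hTe : ∀ t ∈ T, e * t = t * e := by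
    intro t ht
    induction ht using Submodule.span_induction with
    | mem g hg => exact hGe g hg
    | zero => simp
    | add a b _ _ ha hb => rw [mul_add, add_mul, ha, hb]
    | smul n a _ ha => rw [mul_smul_comm, smul_mul_assoc, ha]
  have hGM : ∀ g ∈ G, g ∈ M := by
    intro g hg
    rw [hMgen]
    exact Submodule.subset_span ⟨1, g, hg, (one_mul g).symm⟩
  have hTM : T ≤ M := Submodule.span_le.mpr fun g hg => hGM g hg
  -- M is a left ideal
  have hMl : ∀ y : H, ∀ a ∈ M, y * a ∈ M := by
    intro y a ha
    rw [hMgen] at ha ⊢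
    induction ha using Submodule.span_induction with
    | mem z hz =>
        obtain ⟨y', g, hg, rfl⟩ := hz
        exact Submodule.subset_span ⟨y * y', g, hg, (mul_assoc _ _ _).symm⟩
    | zero => simpa using Submodule.zero_mem _
    | add a b _ _ ha hb => rw [mul_add]; exact Submodule.add_mem _ ha hb
    | smul n a _ ha => rw [mul_smul_comm]; exact Submodule.smul_mem _ _ ha
  have hMtop : M * (⊤ : Submodule ℕ H) ≤ M :=
    Submodule.mul_le.mpr fun a ha y _ => hM_twosided a ha y
  have hMT : M ≤ (⊤ : Submodule ℕ H) * T := by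
    rw [hMgen]
    apply Submodule.span_le.mpr
    rintro z ⟨y, g, hg, rfl⟩
    exact Submodule.mul_mem_mul trivial (Submodule.subset_span hg)
  -- pushing T past arbitrary elements
  have hTtop : T * (⊤ : Submodule ℕ H) ≤ (⊤ : Submodule ℕ H) * T := by
    apply Submodule.mul_le.mpr
    intro t ht y _
    induction ht using Submodule.span_induction with
    | mem g hg =>
        rcases hg with ⟨j, rfl⟩ | ⟨i, rfl⟩
        · rw [hp_central j y]
          exact Submodule.mul_mem_mul trivial
            (Submodule.subset_span (Or.inl ⟨j, rfl⟩))
        · have h1 : x i * y - y * x i ∈ (⊤ : Submodule ℕ H) * T := by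
            refine Submodule.span_le.mpr ?_ (hx_comm i y)
            rintro z ⟨j, y', rfl⟩
            rw [hp_central j y']
            exact Submodule.mul_mem_mul trivial
              (Submodule.subset_span (Or.inl ⟨j, rfl⟩))
          have h2 : y * x i ∈ (⊤ : Submodule ℕ H) * T :=
            Submodule.mul_mem_mul trivial (Submodule.subset_span (Or.inr ⟨i, rfl⟩))
          have h3 := Submodule.add_mem _ h1 h2
          simpa using h3
    | zero => simpa using Submodule.zero_mem _
    | add a b _ _ ha hb => rw [add_mul]; exact Submodule.add_mem _ ha hb
    | smul n a _ ha => rw [smul_mul_assoc]; exact Submodule.smul_mem _ _ ha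
  have hTktop : ∀ k : ℕ, T ^ k * (⊤ : Submodule ℕ H) ≤ (⊤ : Submodule ℕ H) * T ^ k := by
    intro k
    induction k with
    | zero => rw [pow_zero, one_mul, mul_one]
    | succ k ih =>
        calc T ^ (k + 1) * ⊤ = T ^ k * (T * ⊤) := by rw [pow_succ, mul_assoc]
          _ ≤ T ^ k * (⊤ * T) := mul_le_mul' le_rfl hTtop
          _ = (T ^ k * ⊤) * T := by rw [mul_assoc]
          _ ≤ (⊤ * T ^ k) * T := mul_le_mul' ih le_rfl
          _ = ⊤ * T ^ (k + 1) := by rw [mul_assoc, pow_succ]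
  have hMn : ∀ n : ℕ, M ^ (n + 1) ≤ M * T ^ n := by
    intro n
    induction n with
    | zero => rw [pow_one, pow_zero, mul_one]
    | succ n ih =>
        calc M ^ (n + 2) = M ^ (n + 1) * M := pow_succ M (n + 1)
          _ ≤ (M * T ^ n) * (⊤ * T) := mul_le_mul' ih hMT
          _ = M * ((T ^ n * ⊤) * T) := by rw [mul_assoc, mul_assoc]
          _ ≤ M * ((⊤ * T ^ n) * T) :=
              mul_le_mul' le_rfl (mul_le_mul' (hTktop n) le_rfl)
          _ = (M * ⊤) * T ^ (n + 1) := by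
              rw [pow_succ, mul_assoc M ⊤ (T ^ n * T), ← mul_assoc ⊤ (T ^ n) T]
          _ ≤ M * T ^ (n + 1) := mul_le_mul' hMtop le_rfl
  -- key multiplicative identity for f on products with elements of T
  have hfmul : ∀ (b : H), ∀ t ∈ T, f (b * t) = f b * f t := by
    intro b t ht
    have het : e * t = t * e := hTe t ht
    have h1 : e * (t * e) = t * e := by rw [← mul_assoc, het, mul_assoc, he]
    show e * (b * t * e) = (e * (b * e)) * (e * (t * e))
    rw [h1, mul_assoc e (b * e) (t * e), mul_assoc b e (t * e), h1, mul_assoc b t e]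
  set A : Submodule ℕ H := Submodule.map f M with hA
  have hkey : ∀ k : ℕ, Submodule.map f (M * T ^ k) ≤ A ^ (k + 1) := by
    intro k
    induction k with
    | zero => rw [pow_zero, mul_one, pow_one]
    | succ k ih =>
        have hrw : M * T ^ (k + 1) = (M * T ^ k) * T := by rw [pow_succ, ← mul_assoc]
        rw [hrw, Submodule.map_le_iff_le_comap]
        apply Submodule.mul_le.mpr
        intro b hb t ht
        have hfb : f b ∈ A ^ (k + 1) := ih (Submodule.mem_map_of_mem hb)
        have hft : f t ∈ A := Submodule.mem_map_of_mem (hTM ht)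
        rw [Submodule.mem_comap, hfmul b t ht, pow_succ]
        exact Submodule.mul_mem_mul hfb hft
  -- part 1 preliminaries
  have hAS : A ≤ commSub e := by
    rintro _ ⟨a, _, rfl⟩
    rw [mem_commSub]
    constructor
    · show e * (e * (a * e)) = e * (a * e)
      rw [← mul_assoc, he]
    · show (e * (a * e)) * e = e * (a * e)
      rw [mul_assoc, mul_assoc, he]
  have hAM : A ≤ M := by
    rintro _ ⟨a, ha, rfl⟩
    exact hMl e _ (hM_twosided a ha e)
  have hApow : ∀ k : ℕ, A ^ (k + 1) ≤ commSub e ⊓ M ^ (k + 1) := by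
    intro k
    induction k with
    | zero => rw [pow_one, pow_one]; exact le_inf hAS hAM
    | succ k ih =>
        rw [pow_succ]
        apply Submodule.mul_le.mpr
        intro a ha b hb
        have ha' := ih ha
        have haS : e * a = a ∧ a * e = a := (Submodule.mem_inf.mp ha').1
        have haM : a ∈ M ^ (k + 1) := (Submodule.mem_inf.mp ha').2
        have hbS : e * b = b ∧ b * e = b := hAS hb
        have hbM : b ∈ M := hAM hb
        refine Submodule.mem_inf.mpr ⟨?_, ?_⟩
        · rw [mem_commSub]
          constructor
          · rw [← mul_assoc, haS.1]
          · rw [mul_assoc, hbS.2]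
        · rw [pow_succ]
          exact Submodule.mul_mem_mul haM hbM
  constructor
  · -- (e m e)^n ⊆ e m^n e
    intro n hn
    obtain ⟨k, rfl⟩ : ∃ k, n = k + 1 := ⟨n - 1, (Nat.succ_pred_eq_of_pos hn).symm⟩
    intro z hz
    have hz' := hApow k hz
    have hzS : e * z = z ∧ z * e = z := (Submodule.mem_inf.mp hz').1
    have hzM : z ∈ M ^ (k + 1) := (Submodule.mem_inf.mp hz').2
    exact Submodule.mem_map.mpr ⟨z, hzM, by show e * (z * e) = z; rw [hzS.2, hzS.1]⟩
  · -- e m^N e ⊆ (e m e)^n with N = n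
    intro n hn
    refine ⟨n, ?_⟩
    obtain ⟨k, rfl⟩ : ∃ k, n = k + 1 := ⟨n - 1, (Nat.succ_pred_eq_of_pos hn).symm⟩
    calc Submodule.map f (M ^ (k + 1))
        ≤ Submodule.map f (M * T ^ k) := Submodule.map_mono (hMn k)
      _ ≤ A ^ (k + 1) := hkey k
end
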